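/- For a C¹ vector field Z(x′, t′) : ℝ³ × ℝ → ℝ³ and retarded time t′ = t − r/c with r = ‖x − x′‖, the curl with respect to x of the retarded quotient satisfies ∇_x × ([Z]/r) = ((1/r³)[Z] + (1/(r² c))[∂Z/∂t′]) × r⃗, for x ≠ x′, where r⃗ = x − x′. -/

import Mathlib

/-- Partial derivative in the `i`-th coordinate direction on ℝ³. -/
noncomputable def pd (i : Fin 3) (f : EuclideanSpace ℝ (Fin 3) → ℝ)
    (x : EuclideanSpace ℝ (Fin 3)) : ℝ :=
  fderiv ℝ f x (EuclideanSpace.single i 1)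

/-- The curl of a vector field on ℝ³. -/
noncomputable def curl (a : EuclideanSpace ℝ (Fin 3) → EuclideanSpace ℝ (Fin 3))
    (x : EuclideanSpace ℝ (Fin 3)) : Fin 3 → ℝ :=
  ![pd 1 (fun y => a y 2) x - pd 2 (fun y => a y 1) x,
    pd 2 (fun y => a y 0) x - pd 0 (fun y => a y 2) x,
    pd 0 (fun y => a y 1) x - pd 1 (fun y => a y 0) x]

/-- The cross product of two vectors in ℝ³. -/
def cross3 (a b : Fin 3 → ℝ) : Fin 3 → ℝ :=
  ![a 1 * b 2 - a 2 * b 1, a 2 * b 0 - a 0 * b 2, a 0 * b 1 - a 1 * b 0]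

lemma hasFDerivAt_norm_sub (x x' : EuclideanSpace ℝ (Fin 3)) (hx : x ≠ x') :
    HasFDerivAt (fun y => ‖y - x'‖) ((‖x - x'‖)⁻¹ • (innerSL ℝ (x - x'))) x := by
  have hne : x - x' ≠ 0 := sub_ne_zero.2 hx
  have hn : ‖x - x'‖ ≠ 0 := norm_ne_zero_iff.2 hne
  have h1 : HasFDerivAt (fun y : EuclideanSpace ℝ (Fin 3) => y - x')
      (ContinuousLinearMap.id ℝ _) x := (hasFDerivAt_id x).sub_const x'
  have h2 := h1.norm_sq
  have h3 : HasDerivAt Real.sqrt (1 / (2 * Real.sqrt (‖x - x'‖ ^ 2))) (‖x - x'‖ ^ 2) :=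
    Real.hasDerivAt_sqrt (pow_ne_zero 2 hn)
  have h4 := h3.comp_hasFDerivAt x h2
  have heq : (fun y : EuclideanSpace ℝ (Fin 3) => ‖y - x'‖)
      = fun y => Real.sqrt (‖y - x'‖ ^ 2) := by
    funext y; rw [Real.sqrt_sq (norm_nonneg _)]
  rw [heq]
  refine h4.congr_fderiv ?_
  rw [Real.sqrt_sq (norm_nonneg _)]
  ext v
  simp [ContinuousLinearMap.smul_apply, smul_smul]
  ring

lemma pd_retarded (Z : EuclideanSpace ℝ (Fin 3) × ℝ → EuclideanSpace ℝ (Fin 3))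
    (hZ : ContDiff ℝ 1 Z) (c : ℝ) (hc : 0 < c) (x' x : EuclideanSpace ℝ (Fin 3))
    (hx : x ≠ x') (t : ℝ) (i j : Fin 3) :
    pd i (fun y => (‖y - x'‖)⁻¹ * Z (x', t - ‖y - x'‖ / c) j) x =
      -((x - x') i) * ((‖x - x'‖ ^ 3)⁻¹ * Z (x', t - ‖x - x'‖ / c) j
        + (‖x - x'‖ ^ 2 * c)⁻¹ * deriv (fun s => Z (x', s) j) (t - ‖x - x'‖ / c)) := by
  have hne : x - x' ≠ 0 := sub_ne_zero.2 hx
  have hn : ‖x - x'‖ ≠ 0 := norm_ne_zero_iff.2 hne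
  set R := ‖x - x'‖ with hR
  set L := (R⁻¹ • (innerSL ℝ (x - x'))) with hL
  have hr : HasFDerivAt (fun y => ‖y - x'‖) L x := hasFDerivAt_norm_sub x x' hx
  -- derivative of the retarded time
  have hu : HasFDerivAt (fun y => t - ‖y - x'‖ / c) (-(c⁻¹ • L)) x := by
    have h5 : HasDerivAt (fun s : ℝ => t - s / c) (-c⁻¹) (‖x - x'‖) := by
      simpa [div_eq_inv_mul] using
        ((hasDerivAt_id (‖x - x'‖)).const_mul c⁻¹).const_sub t
    have := h5.comp_hasFDerivAt x hr
    refine this.congr_fderiv ?_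
    ext v; simp
  -- derivative of 1/r
  have hinv : HasFDerivAt (fun y => (‖y - x'‖)⁻¹) (-(R ^ 2)⁻¹ • L) x := by
    have h5 : HasDerivAt (fun s : ℝ => s⁻¹) (-(R ^ 2)⁻¹) R := by
      simpa using hasDerivAt_inv hn
    exact h5.comp_hasFDerivAt x hr
  -- differentiability of s ↦ Z (x', s) j
  set s₀ := t - R / c with hs₀
  have hZd : Differentiable ℝ Z := hZ.differentiable one_ne_zero
  have hcurve : DifferentiableAt ℝ (fun s : ℝ => Z (x', s)) s₀ :=
    (hZd.comp (Differentiable.prodMk (differentiable_const x') differentiable_id)) s₀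
  have hgj : DifferentiableAt ℝ (fun s => Z (x', s) j) s₀ := by
    have := ((EuclideanSpace.proj j).differentiableAt (x := Z (x', s₀))).comp s₀ hcurve
    exact this
  set D := deriv (fun s => Z (x', s) j) s₀ with hD
  have hgj' : HasDerivAt (fun s => Z (x', s) j) D s₀ := hgj.hasDerivAt
  have hcomp : HasFDerivAt (fun y => Z (x', t - ‖y - x'‖ / c) j) (D • (-(c⁻¹ • L))) x :=
    HasDerivAt.comp_hasFDerivAt (h₂ := fun s => Z (x', s) j) x hgj' hu
  have hmul := hinv.mul hcomp
  have hf : pd i (fun y => (‖y - x'‖)⁻¹ * Z (x', t - ‖y - x'‖ / c) j) x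
      = ((‖x - x'‖)⁻¹ • (D • (-(c⁻¹ • L)))
        + Z (x', t - ‖x - x'‖ / c) j • (-(R ^ 2)⁻¹ • L)) (EuclideanSpace.single i 1) := by
    rw [pd]; exact congrArg (fun f => f (EuclideanSpace.single i 1)) hmul.fderiv
  rw [hf]
  have hLe : L (EuclideanSpace.single i 1) = R⁻¹ * (x - x') i := by
    simp [hL, ContinuousLinearMap.smul_apply, real_inner_comm, EuclideanSpace.inner_single_right]
  simp only [ContinuousLinearMap.add_apply, ContinuousLinearMap.smul_apply,
    ContinuousLinearMap.neg_apply, hLe, smul_eq_mul]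
  have hgoal : ∀ A E v : ℝ,
      R⁻¹ * (E * -(c⁻¹ * (R⁻¹ * v))) + A * (-(R ^ 2)⁻¹ * (R⁻¹ * v))
        = -v * ((R ^ 3)⁻¹ * A + (R ^ 2 * c)⁻¹ * E) := by
    intro A E v
    field_simp
    ring
  exact hgoal _ _ _

/-- Curl of the retarded quotient [Z]/r:
∇ₓ × ([Z]/r) = ((1/r³)[Z] + (1/(r²c))[∂Z/∂t′]) × r⃗,
where [Z](x,t) = Z(x′, t − ‖x−x′‖/c) and r⃗ = x − x′. -/
theorem curl_retarded_quotient
    (Z : EuclideanSpace ℝ (Fin 3) × ℝ → EuclideanSpace ℝ (Fin 3)) (hZ : ContDiff ℝ 1 Z)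
    (c : ℝ) (hc : 0 < c) (x' : EuclideanSpace ℝ (Fin 3))
    (x : EuclideanSpace ℝ (Fin 3)) (hx : x ≠ x') (t : ℝ) :
    curl (fun y => (‖y - x'‖)⁻¹ • Z (x', t - ‖y - x'‖ / c)) x =
      cross3
        (fun i => (‖x - x'‖ ^ 3)⁻¹ * Z (x', t - ‖x - x'‖ / c) i
          + (‖x - x'‖ ^ 2 * c)⁻¹ * deriv (fun s => Z (x', s) i) (t - ‖x - x'‖ / c))
        (fun i => (x - x') i) := by
  have key : ∀ i j : Fin 3,
      pd i (fun y => ((‖y - x'‖)⁻¹ • Z (x', t - ‖y - x'‖ / c) : EuclideanSpace ℝ (Fin 3)) j) x =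
      -((x - x') i) * ((‖x - x'‖ ^ 3)⁻¹ * Z (x', t - ‖x - x'‖ / c) j
        + (‖x - x'‖ ^ 2 * c)⁻¹ * deriv (fun s => Z (x', s) j) (t - ‖x - x'‖ / c)) := by
    intro i j
    have := pd_retarded Z hZ c hc x' x hx t i j
    convert this using 2
    funext y; simp
  simp only [curl, cross3]
  rw [key 1 2, key 2 1, key 2 0, key 0 2, key 0 1, key 1 0]
  funext k
  fin_cases k <;> simp <;> ring
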